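/- Let A ⊆ B ⊆ Q₁ be Lebesgue-measurable subsets of the unit cube Q₁ in ℝ^d, and let 0 < δ < 1. Assume (a) |A| ≤ δ, and (b) whenever Q is a dyadic subcube of Q₁ with |A ∩ Q| > δ|Q|, its predecessor Q̃ (the dyadic cube of twice the side length containing Q) satisfies Q̃ ⊆ B. Then |A| ≤ δ|B|. -/

import Mathlib

open MeasureTheory
open scoped ENNReal

/-- A dyadic subcube of the unit cube `[0,1)^d`: generation `i`, index `j`. -/
def dyadicCube (d i : ℕ) (j : Fin d → ℕ) : Set (Fin d → ℝ) :=
  {x | ∀ l, (j l : ℝ) / 2 ^ i ≤ x l ∧ x l < ((j l : ℝ) + 1) / 2 ^ i}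

open Filter Metric
open scoped Topology

namespace CZaux

variable {d : ℕ}

lemma cube_eq_pi (i : ℕ) (j : Fin d → ℕ) :
    dyadicCube d i j =
      Set.pi Set.univ (fun l => Set.Ico ((j l : ℝ) / 2 ^ i) (((j l : ℝ) + 1) / 2 ^ i)) := by
  ext x; simp [dyadicCube, Set.mem_pi]

lemma cube_measurable (i : ℕ) (j : Fin d → ℕ) : MeasurableSet (dyadicCube d i j) := by
  rw [cube_eq_pi]
  exact MeasurableSet.univ_pi fun l => measurableSet_Ico

lemma cube_volume (i : ℕ) (j : Fin d → ℕ) :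
    volume (dyadicCube d i j) = ENNReal.ofReal ((2 ^ i : ℝ)⁻¹) ^ d := by
  rw [cube_eq_pi, volume_pi_pi]
  have : ∀ l : Fin d, volume (Set.Ico ((j l : ℝ) / 2 ^ i) (((j l : ℝ) + 1) / 2 ^ i))
      = ENNReal.ofReal ((2 ^ i : ℝ)⁻¹) := by
    intro l
    rw [Real.volume_Ico]
    congr 1
    field_simp
    ring
  simp [this]

lemma cube_nonempty (i : ℕ) (j : Fin d → ℕ) : (dyadicCube d i j).Nonempty := by
  refine ⟨fun l => (j l : ℝ) / 2 ^ i, fun l => ⟨le_refl _, ?_⟩⟩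
  have h2 : (0:ℝ) < 2 ^ i := by positivity
  rw [div_lt_div_iff₀ h2 h2]
  nlinarith

lemma cube_vol_pos (i : ℕ) (j : Fin d → ℕ) : 0 < volume (dyadicCube d i j) := by
  rw [cube_volume]
  have : (0:ℝ) < (2 ^ i : ℝ)⁻¹ := by positivity
  positivity

lemma cube_vol_ne_top (i : ℕ) (j : Fin d → ℕ) : volume (dyadicCube d i j) ≠ ∞ := by
  rw [cube_volume]
  exact ENNReal.pow_ne_top ENNReal.ofReal_ne_top

/-- generation-`i` dyadic index of `x` -/
noncomputable def J (i : ℕ) (x : Fin d → ℝ) : Fin d → ℕ := fun l => ⌊x l * (2:ℝ) ^ i⌋₊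

lemma detJ {i : ℕ} {j : Fin d → ℕ} {x : Fin d → ℝ} (hx : x ∈ dyadicCube d i j) :
    j = J i x := by
  funext l
  obtain ⟨h1, h2⟩ := hx l
  have h2i : (0:ℝ) < 2 ^ i := by positivity
  have hle : (j l : ℝ) ≤ x l * 2 ^ i := (div_le_iff₀ h2i).mp h1
  have hlt : x l * 2 ^ i < (j l : ℝ) + 1 := by
    have h2' : x l < ((j l : ℝ) + 1) / 2 ^ i := h2
    calc x l * 2 ^ i < (((j l : ℝ) + 1) / 2 ^ i) * 2 ^ i := by
          exact mul_lt_mul_of_pos_right h2' h2i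
      _ = (j l : ℝ) + 1 := by field_simp
  have h0 : (0:ℝ) ≤ x l * 2 ^ i := le_trans (j l).cast_nonneg hle
  simp only [J]
  exact (Nat.floor_eq_iff h0).mpr ⟨hle, by push_cast; exact hlt⟩ |>.symm

lemma mem_cube_J {i : ℕ} {x : Fin d → ℝ} (hx : x ∈ dyadicCube d 0 0) :
    x ∈ dyadicCube d i (J i x) := by
  intro l
  obtain ⟨h1, h2⟩ := hx l
  simp only [Pi.zero_apply, Nat.cast_zero] at h1 h2
  norm_num at h1 h2
  have h2i : (0:ℝ) < 2 ^ i := by positivity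
  have h0 : (0:ℝ) ≤ x l * 2 ^ i := by positivity
  constructor
  · rw [div_le_iff₀ h2i]; exact Nat.floor_le h0
  · rw [lt_div_iff₀ h2i]
    push_cast
    exact Nat.lt_floor_add_one (x l * 2 ^ i)

lemma J_lt {i : ℕ} {x : Fin d → ℝ} (hx : x ∈ dyadicCube d 0 0) (l : Fin d) :
    J i x l < 2 ^ i := by
  obtain ⟨h1, h2⟩ := hx l
  simp only [Pi.zero_apply, Nat.cast_zero] at h1 h2
  norm_num at h1 h2
  have : x l * 2 ^ i < 2 ^ i := by
    have h2i : (0:ℝ) < 2 ^ i := by positivity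
    nlinarith
  exact Nat.floor_lt (by positivity : (0:ℝ) ≤ x l * 2 ^ i) |>.mpr (by push_cast; exact this)

lemma J_succ (i : ℕ) (x : Fin d → ℝ) : J i x = fun l => J (i + 1) x l / 2 := by
  funext l
  simp only [J]
  rw [← Nat.floor_div_ofNat (x l * 2 ^ (i + 1)) 2]
  congr 1
  ring

lemma cube_succ_subset (i : ℕ) (j : Fin d → ℕ) :
    dyadicCube d (i + 1) j ⊆ dyadicCube d i (fun l => j l / 2) := by
  intro y hy l
  obtain ⟨h1, h2⟩ := hy l
  have h2i : (0:ℝ) < 2 ^ i := by positivity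
  have h2i1 : (0:ℝ) < 2 ^ (i + 1) := by positivity
  have hcast : ((j l / 2 : ℕ) : ℝ) * 2 ≤ (j l : ℝ) := by
    have : (j l / 2) * 2 ≤ j l := by omega
    exact_mod_cast this
  have hcast2 : (j l : ℝ) + 1 ≤ (((j l / 2 : ℕ) : ℝ) + 1) * 2 := by
    have : j l + 1 ≤ (j l / 2 + 1) * 2 := by omega
    exact_mod_cast this
  constructor
  · refine le_trans ?_ h1
    rw [div_le_div_iff₀ h2i h2i1]
    have : (2:ℝ) ^ (i+1) = 2 ^ i * 2 := by ring
    nlinarith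
  · refine lt_of_lt_of_le h2 ?_
    rw [div_le_div_iff₀ h2i1 h2i]
    have : (2:ℝ) ^ (i+1) = 2 ^ i * 2 := by ring
    nlinarith

lemma cube_subset_of_le {i i' : ℕ} (h : i ≤ i') {j j' : Fin d → ℕ} {x : Fin d → ℝ}
    (hx : x ∈ dyadicCube d i j) (hx' : x ∈ dyadicCube d i' j') :
    dyadicCube d i' j' ⊆ dyadicCube d i j := by
  obtain ⟨k, rfl⟩ := Nat.exists_eq_add_of_le h
  clear h
  induction k generalizing j' with
  | zero =>
    have e1 := detJ hx
    have e2 := detJ hx'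
    simp only [Nat.add_zero] at *
    rw [e1, e2]
  | succ k ih =>
    have hnest := cube_succ_subset (i + k) j'
    have hx'' : x ∈ dyadicCube d (i + k) (fun l => j' l / 2) := hnest hx'
    exact (hnest.trans (ih hx''))

lemma density_point {A : Set (Fin d → ℝ)} (hAm : MeasurableSet A)
    {δ : ℝ} (hδ₀ : 0 < δ) (hδ₁ : δ < 1) {x : Fin d → ℝ} (hxQ : x ∈ dyadicCube d 0 0)
    (htend : Tendsto (fun r => volume (A ∩ closedBall x r) / volume (closedBall x r))
      (𝓝[>] (0:ℝ)) (𝓝 1)) :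
    ∃ i : ℕ, ENNReal.ofReal δ * volume (dyadicCube d (i+1) (J (i+1) x)) <
      volume (A ∩ dyadicCube d (i+1) (J (i+1) x)) := by
  set ε : ℝ≥0∞ := ENNReal.ofReal (1 - δ) / 2 ^ d with hεdef
  have h1δ : (0:ℝ) < 1 - δ := by linarith
  have hε0 : 0 < ε := ENNReal.div_pos (ENNReal.ofReal_pos.mpr h1δ).ne'
    (ENNReal.pow_ne_top (by norm_num))
  have hε1 : ε ≤ 1 := by
    rw [hεdef, ENNReal.div_le_iff (by positivity) (ENNReal.pow_ne_top (by norm_num))]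
    calc ENNReal.ofReal (1 - δ) ≤ 1 := by
          rw [← ENNReal.ofReal_one]; exact ENNReal.ofReal_le_ofReal (by linarith)
      _ ≤ 1 * 2 ^ d := by rw [one_mul]; exact one_le_pow_of_one_le' (by norm_num) d
  have hεtop : ε ≠ ∞ := ne_top_of_le_ne_top ENNReal.one_ne_top hε1
  have hlt1 : (1:ℝ≥0∞) - ε < 1 :=
    ENNReal.sub_lt_self ENNReal.one_ne_top one_ne_zero hε0.ne'
  have hev := htend.eventually_const_lt hlt1
  -- sequence r i = (2^(i+1))⁻¹ tends to 0 within (0, ∞)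
  have hseq : Tendsto (fun i : ℕ => ((2:ℝ) ^ (i+1))⁻¹) atTop (𝓝[>] (0:ℝ)) := by
    rw [tendsto_nhdsWithin_iff]
    constructor
    · have h0 : Tendsto (fun i : ℕ => ((2:ℝ)⁻¹) ^ i) atTop (𝓝 0) :=
        tendsto_pow_atTop_nhds_zero_of_lt_one (by norm_num) (by norm_num)
      have := h0.comp (tendsto_add_atTop_nat 1)
      simpa [Function.comp_def, inv_pow] using this
    · filter_upwards with i
      simp only [Set.mem_Ioi]
      positivity
  obtain ⟨i, hi⟩ := (hseq.eventually hev).exists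
  refine ⟨i, ?_⟩
  set r : ℝ := ((2:ℝ) ^ (i+1))⁻¹ with hrdef
  have hr0 : (0:ℝ) < r := by positivity
  set Q := dyadicCube d (i+1) (J (i+1) x) with hQdef
  set cb := closedBall x r with hcbdef
  have hxQmem : x ∈ Q := mem_cube_J hxQ
  have hQcb : Q ⊆ cb := by
    intro y hy
    rw [hcbdef, mem_closedBall, dist_pi_le_iff hr0.le]
    intro l
    obtain ⟨hy1, hy2⟩ := hy l
    obtain ⟨hx1, hx2⟩ := hxQmem l
    have hlen : ((J (i+1) x l : ℝ) + 1) / 2 ^ (i+1) = (J (i+1) x l : ℝ) / 2 ^ (i+1) + r := by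
      rw [hrdef]; field_simp
    rw [Real.dist_eq, abs_sub_le_iff]
    constructor <;> linarith [hy1, hy2, hx1, hx2, hlen]
  have hvQ : volume Q = ENNReal.ofReal ((2 ^ (i+1) : ℝ)⁻¹) ^ d := cube_volume _ _
  have hvcb : volume cb = 2 ^ d * volume Q := by
    rw [hcbdef, Real.volume_pi_closedBall x hr0.le, hvQ]
    rw [ENNReal.ofReal_pow (by positivity), Fintype.card_fin, ← mul_pow]
    congr 1
    rw [← ENNReal.ofReal_ofNat 2, ← ENNReal.ofReal_mul (by norm_num)]
  have hvQ0 : volume Q ≠ 0 := by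
    rw [hvQ]
    have : (0:ℝ) < (2 ^ (i+1) : ℝ)⁻¹ := by positivity
    positivity
  have hvQtop : volume Q ≠ ∞ := cube_vol_ne_top _ _
  have hvcb0 : volume cb ≠ 0 := by
    rw [hvcb]; exact mul_ne_zero (by positivity) hvQ0
  have hvcbtop : volume cb ≠ ∞ := by
    rw [hvcb]; exact ENNReal.mul_ne_top (ENNReal.pow_ne_top (by norm_num)) hvQtop
  have h1 : (1 - ε) * volume cb < volume (A ∩ cb) := by
    rw [← ENNReal.lt_div_iff_mul_lt (Or.inl hvcb0) (Or.inl hvcbtop)]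
    exact hi
  have hpart : volume (A ∩ cb) + volume (cb \ A) = volume cb := by
    rw [Set.inter_comm]; exact measure_inter_add_diff cb hAm
  have hsplit : (1 - ε) * volume cb + ε * volume cb = volume cb := by
    rw [← add_mul, tsub_add_cancel_of_le hε1, one_mul]
  have hAcbtop : volume (A ∩ cb) ≠ ∞ :=
    ne_top_of_le_ne_top hvcbtop (measure_mono Set.inter_subset_right)
  have h2 : volume (cb \ A) < ε * volume cb := by
    have key : volume (A ∩ cb) + volume (cb \ A) < volume (A ∩ cb) + ε * volume cb := by
      calc volume (A ∩ cb) + volume (cb \ A) = (1 - ε) * volume cb + ε * volume cb := by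
            rw [hpart, hsplit]
        _ < volume (A ∩ cb) + ε * volume cb :=
            ENNReal.add_lt_add_right (ENNReal.mul_ne_top hεtop hvcbtop) h1
    exact (ENNReal.add_lt_add_iff_left hAcbtop).mp key
  have h3 : volume (Q \ A) < ENNReal.ofReal (1 - δ) * volume Q := by
    calc volume (Q \ A) ≤ volume (cb \ A) := measure_mono (Set.diff_subset_diff_left hQcb)
      _ < ε * volume cb := h2
      _ = ENNReal.ofReal (1 - δ) * volume Q := by
          rw [hvcb, hεdef, div_eq_mul_inv]
          rw [mul_assoc, ← mul_assoc ((2:ℝ≥0∞) ^ d)⁻¹, ENNReal.inv_mul_cancel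
            (by positivity) (ENNReal.pow_ne_top (by norm_num)), one_mul]
  -- conclude badness
  have hQpart : volume (A ∩ Q) + volume (Q \ A) = volume Q := by
    rw [Set.inter_comm]; exact measure_inter_add_diff Q hAm
  have hδsplit : ENNReal.ofReal δ * volume Q + ENNReal.ofReal (1 - δ) * volume Q = volume Q := by
    rw [← add_mul, ← ENNReal.ofReal_add hδ₀.le (by linarith)]
    norm_num
  have key : ENNReal.ofReal δ * volume Q + volume (Q \ A)
      < volume (A ∩ Q) + volume (Q \ A) := by
    calc ENNReal.ofReal δ * volume Q + volume (Q \ A)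
        < ENNReal.ofReal δ * volume Q + ENNReal.ofReal (1 - δ) * volume Q :=
          ENNReal.add_lt_add_left
            (ENNReal.mul_ne_top ENNReal.ofReal_ne_top hvQtop) h3
      _ = volume (A ∩ Q) + volume (Q \ A) := by rw [hδsplit, hQpart]
  exact (ENNReal.add_lt_add_iff_right
    (ne_top_of_le_ne_top hvQtop (measure_mono Set.diff_subset))).mp key


lemma J_zero {x : Fin d → ℝ} (hx : x ∈ dyadicCube d 0 0) : J 0 x = 0 := by
  funext l
  obtain ⟨h1, h2⟩ := hx l
  simp only [Pi.zero_apply, Nat.cast_zero] at h1 h2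
  norm_num at h1 h2
  have hlt : x l * (2:ℝ) ^ 0 < 1 := by rw [pow_zero, mul_one]; exact h2
  simp only [J, Pi.zero_apply]
  exact Nat.floor_eq_zero.mpr hlt

end CZaux

open CZaux

/-- the Calderón–Zygmund decomposition lemma.  The predecessor of the
dyadic cube of generation `i+1` and index `j` is the cube of generation `i` and
index `fun l => j l / 2`. -/
theorem calderon_zygmund_decomposition (d : ℕ) (δ : ℝ) (hδ₀ : 0 < δ) (hδ₁ : δ < 1)
    (A B : Set (Fin d → ℝ)) (hAB : A ⊆ B) (hBQ : B ⊆ dyadicCube d 0 0)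
    (hAm : MeasurableSet A) (hBm : MeasurableSet B)
    (hA : volume A ≤ ENNReal.ofReal δ)
    (hCZ : ∀ (i : ℕ) (j : Fin d → ℕ), (∀ l, j l < 2 ^ (i + 1)) →
      ENNReal.ofReal δ * volume (dyadicCube d (i + 1) j) <
        volume (A ∩ dyadicCube d (i + 1) j) →
      dyadicCube d i (fun l => j l / 2) ⊆ B) :
    volume A ≤ ENNReal.ofReal δ * volume B := by
  classical
  have hAQ : A ⊆ dyadicCube d 0 0 := hAB.trans hBQ
  -- good points of A
  set A' : Set (Fin d → ℝ) := {x | x ∈ A ∧ ∃ i : ℕ,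
    ENNReal.ofReal δ * volume (dyadicCube d (i+1) (J (i+1) x)) <
      volume (A ∩ dyadicCube d (i+1) (J (i+1) x))} with hA'def
  have hnull : volume (A \ A') = 0 := by
    have hbes := Besicovitch.ae_tendsto_measure_inter_div (volume : Measure (Fin d → ℝ)) A
    have hmem : ∀ᵐ x ∂(volume.restrict A), x ∈ A := ae_restrict_mem hAm
    have hae : ∀ᵐ x ∂(volume.restrict A), x ∈ A' := by
      filter_upwards [hbes, hmem] with x htend hxA
      exact ⟨hxA, density_point hAm hδ₀ hδ₁ (hAQ hxA) htend⟩
    rw [Filter.eventually_iff, mem_ae_iff] at hae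
    rw [Set.diff_eq_compl_inter, ← Measure.restrict_apply' hAm]
    exact hae
  -- the family of admissible cubes
  set S : Set (ℕ × (Fin d → ℕ)) := {p | dyadicCube d p.1 p.2 ⊆ B ∧
    volume (A ∩ dyadicCube d p.1 p.2) ≤ ENNReal.ofReal δ * volume (dyadicCube d p.1 p.2)}
    with hSdef
  set M : Set (ℕ × (Fin d → ℕ)) := {p | p ∈ S ∧ ∀ q ∈ S,
    dyadicCube d p.1 p.2 ⊆ dyadicCube d q.1 q.2 →
      dyadicCube d p.1 p.2 = dyadicCube d q.1 q.2} with hMdef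
  -- every admissible cube is contained in a maximal one
  have hmax : ∀ p ∈ S, ∃ q ∈ M, dyadicCube d p.1 p.2 ⊆ dyadicCube d q.1 q.2 := by
    intro p hp
    set T : Set ℕ := {i' | ∃ j', ((i', j') ∈ S) ∧
      dyadicCube d p.1 p.2 ⊆ dyadicCube d i' j'} with hTdef
    have hT : p.1 ∈ T := ⟨p.2, hp, subset_rfl⟩
    obtain ⟨j0, hj0S, hj0sub⟩ := Nat.sInf_mem (⟨p.1, hT⟩ : T.Nonempty)
    refine ⟨(sInf T, j0), ⟨hj0S, ?_⟩, hj0sub⟩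
    intro r hrS hsub
    have hrT : r.1 ∈ T := ⟨r.2, by simpa using hrS, hj0sub.trans hsub⟩
    have hle : sInf T ≤ r.1 := Nat.sInf_le hrT
    obtain ⟨x0, hx0⟩ := cube_nonempty (d := d) (sInf T) j0
    exact subset_antisymm hsub (cube_subset_of_le hle hx0 (hsub hx0))
  -- the collection of maximal cubes
  set C : Set (Set (Fin d → ℝ)) := (fun p : ℕ × (Fin d → ℕ) => dyadicCube d p.1 p.2) '' M
    with hCdef
  have hCcount : C.Countable := (Set.to_countable M).image _
  have hCdisj : C.PairwiseDisjoint id := by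
    intro c1 hc1 c2 hc2 hne
    obtain ⟨p, hpM, rfl⟩ := hc1
    obtain ⟨q, hqM, rfl⟩ := hc2
    rw [Function.onFun, Set.disjoint_left]
    intro x hxp hxq
    rcases le_total p.1 q.1 with h | h
    · have hsub := cube_subset_of_le h hxp hxq
      exact hne ((hqM.2 p hpM.1 hsub).symm)
    · have hsub := cube_subset_of_le h hxq hxp
      exact hne (hpM.2 q hqM.1 hsub)
  have hCmeas : ∀ c ∈ C, MeasurableSet c := by
    rintro c ⟨p, _, rfl⟩
    exact cube_measurable p.1 p.2
  have hCB : ∀ c ∈ C, c ⊆ B := by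
    rintro c ⟨p, hpM, rfl⟩
    exact hpM.1.1
  have hCgood : ∀ c ∈ C, volume (A ∩ c) ≤ ENNReal.ofReal δ * volume c := by
    rintro c ⟨p, hpM, rfl⟩
    exact hpM.1.2
  set U : Set (Fin d → ℝ) := ⋃ c ∈ C, c with hUdef
  -- A' is covered by the maximal cubes
  have hA'U : A' ⊆ U := by
    rintro x ⟨hxA, hex⟩
    have hxQ : x ∈ dyadicCube d 0 0 := hAQ hxA
    set n : ℕ := Nat.find hex with hndef
    have hbad := Nat.find_spec hex
    have hpS : (n, J n x) ∈ S := by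
      constructor
      · have hsub := hCZ n (J (n+1) x) (fun l => J_lt hxQ l) hbad
        rwa [← J_succ n x] at hsub
      · match n, hndef with
        | 0, hndef =>
          have hJ0 : J 0 x = (0 : Fin d → ℕ) := J_zero hxQ
          simp only [hJ0]
          have hAQ1 : A ∩ dyadicCube d 0 0 = A := Set.inter_eq_self_of_subset_left hAQ
          have hv1 : volume (dyadicCube d 0 (0 : Fin d → ℕ)) = 1 := by
            rw [cube_volume]; norm_num
          rw [hAQ1, hv1, mul_one]
          exact hA
        | (k+1), hndef =>
          have hmin : ¬ (ENNReal.ofReal δ * volume (dyadicCube d (k+1) (J (k+1) x)) <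
              volume (A ∩ dyadicCube d (k+1) (J (k+1) x))) := by
            have := Nat.find_min hex (by omega : k < Nat.find hex)
            simpa using this
          exact not_lt.mp hmin
    obtain ⟨q, hqM, hsub⟩ := hmax _ hpS
    have hxn : x ∈ dyadicCube d n (J n x) := mem_cube_J hxQ
    exact Set.mem_biUnion ⟨q, hqM, rfl⟩ (hsub hxn)
  have hUB : U ⊆ B := by
    rw [hUdef]
    exact Set.iUnion₂_subset hCB
  -- put it together
  calc volume A ≤ volume (A ∩ U) + volume (A \ U) := measure_le_inter_add_diff _ _ _
    _ = volume (A ∩ U) := by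
        have : volume (A \ U) = 0 :=
          measure_mono_null (Set.diff_subset_diff_right hA'U) hnull
        rw [this, add_zero]
    _ ≤ ∑' c : C, volume (A ∩ (c : Set (Fin d → ℝ))) := by
        rw [hUdef, Set.inter_iUnion₂]
        exact measure_biUnion_le volume hCcount _
    _ ≤ ∑' c : C, ENNReal.ofReal δ * volume (c : Set (Fin d → ℝ)) :=
        ENNReal.tsum_le_tsum (fun c => hCgood c c.2)
    _ = ENNReal.ofReal δ * ∑' c : C, volume (c : Set (Fin d → ℝ)) := ENNReal.tsum_mul_left
    _ = ENNReal.ofReal δ * volume U := by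
        congr 1
        rw [hUdef]
        exact (measure_biUnion hCcount hCdisj hCmeas).symm
    _ ≤ ENNReal.ofReal δ * volume B := mul_le_mul_right (measure_mono hUB) _
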